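/- Let {λ_t} and {η̃_t} be positive real sequences with η̃_t ≥ 1 for all t, satisfying: (i) λ_{t+1} ≤ (1 − 1/η̃_t)λ_t + m₁λ_t²/2 + m₁²λ_t³/(4η̃_t) whenever m₁λ_t ≤ 2, and (ii) η̃_{t+1} ≤ (1 + m₂λ_t)²η̃_t, for some constants m₁, m₂ > 0. If m·λ₀ ≤ ln(3/2)/(4η̃₀) where m = max{m₁, m₂}, then for all t ≥ 0: η̃_t ≤ η̃₀·exp(2m·∑_{i=0}^{t−1} λ_i) ≤ (3/2)η̃₀ and λ_t ≤ (1 − 1/(2η̃₀))^t·λ₀. -/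
import Mathlib

lemma key_step (l e h m₁ : ℝ) (hl : 0 < l) (he : 1 ≤ e) (hh : 1 ≤ h)
    (heh : e ≤ 3/2 * h) (hm : 0 < m₁) (hsm : m₁ * l ≤ 1/(8*h)) :
    (1 - 1/e) * l + m₁ * l^2/2 + m₁^2 * l^3/(4*e) ≤ (1 - 1/(2*h)) * l := by
  have he0 : (0:ℝ) < e := by linarith
  have hh0 : (0:ℝ) < h := by linarith
  have hsm' : m₁ * l * (8 * h) ≤ 1 := by
    rw [← le_div_iff₀ (by positivity)]; exact hsm
  have hC : 2/(3*h) ≤ 1/e := by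
    rw [div_le_div_iff₀ (by positivity) he0]; linarith
  have hA : m₁ * l^2/2 ≤ l/(16*h) := by
    rw [div_le_div_iff₀ (by norm_num) (by positivity)]
    nlinarith [mul_le_mul_of_nonneg_left hsm' (by positivity : (0:ℝ) ≤ 2*l)]
  have hB : m₁^2 * l^3/(4*e) ≤ l/(256*h) := by
    rw [div_le_div_iff₀ (by positivity) (by positivity)]
    have hs2 : (m₁ * l * (8*h))^2 ≤ 1 := by
      nlinarith [mul_pos (mul_pos hm hl) (by positivity : (0:ℝ) < 8*h)]
    nlinarith [mul_le_mul_of_nonneg_left hs2 (by positivity : (0:ℝ) ≤ 4*l),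
      mul_pos hl (mul_pos hl hl), sq_nonneg (m₁*l), mul_pos hl hh0]
  have hC' : 2/(3*h) * l ≤ 1/e * l := mul_le_mul_of_nonneg_right hC hl.le
  have hD : l/(16*h) + l/(256*h) + l/(2*h) ≤ 2/(3*h) * l := by
    have key : 2/(3*h)*l - (l/(16*h)+l/(256*h)+l/(2*h)) = l * (77/768) / h := by
      field_simp; ring
    have : 0 ≤ l * (77/768) / h := by positivity
    linarith
  have e1 : (1-1/e)*l = l - 1/e*l := by ring
  have e2 : (1-1/(2*h))*l = l - l/(2*h) := by ring
  rw [e1, e2]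
  linarith

/-- **Lemma B.2**: given positive sequences `λ_t` and `η̃_t ≥ 1` satisfying the
quasi-Newton recursions, a small enough `λ₀` yields
`η̃_t ≤ η̃₀ exp(2m ∑_{i<t} λ_i) ≤ (3/2)η̃₀` and `λ_t ≤ (1 − 1/(2η̃₀))^t λ₀`. -/
theorem sequence_linear_convergence (lam eta : ℕ → ℝ) (m₁ m₂ : ℝ)
    (hm₁ : 0 < m₁) (hm₂ : 0 < m₂)
    (hlam : ∀ t, 0 < lam t) (heta : ∀ t, 1 ≤ eta t)
    (h₁ : ∀ t, m₁ * lam t ≤ 2 →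
      lam (t + 1) ≤ (1 - 1 / eta t) * lam t + m₁ * lam t ^ 2 / 2 +
        m₁ ^ 2 * lam t ^ 3 / (4 * eta t))
    (h₂ : ∀ t, eta (t + 1) ≤ (1 + m₂ * lam t) ^ 2 * eta t)
    (h₀ : max m₁ m₂ * lam 0 ≤ Real.log (3 / 2) / (4 * eta 0)) :
    ∀ t : ℕ,
      (eta t ≤ eta 0 * Real.exp (2 * max m₁ m₂ * ∑ i ∈ Finset.range t, lam i) ∧
        eta 0 * Real.exp (2 * max m₁ m₂ * ∑ i ∈ Finset.range t, lam i) ≤ 3 / 2 * eta 0) ∧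
      lam t ≤ (1 - 1 / (2 * eta 0)) ^ t * lam 0 := by
  set m := max m₁ m₂ with hm_def
  set r := 1 - 1/(2*eta 0) with hr_def
  have he0 : (1:ℝ) ≤ eta 0 := heta 0
  have he0' : (0:ℝ) < eta 0 := by linarith
  have hm : 0 < m := lt_of_lt_of_le hm₁ (le_max_left _ _)
  have hm₁le : m₁ ≤ m := le_max_left _ _
  have hm₂le : m₂ ≤ m := le_max_right _ _
  have hlog : Real.log (3/2) ≤ 1/2 := by
    have := Real.log_le_sub_one_of_pos (by norm_num : (0:ℝ) < 3/2)
    linarith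
  have hml0 : m * lam 0 ≤ 1/(8 * eta 0) := by
    calc m * lam 0 ≤ Real.log (3/2) / (4 * eta 0) := h₀
      _ ≤ (1/2)/(4*eta 0) := by gcongr
      _ = 1/(8*eta 0) := by field_simp; ring
  have hee : 1/(8*eta 0) ≤ 1/8 := by
    rw [div_le_div_iff₀ (by positivity) (by norm_num)]; linarith
  have hr0 : 0 ≤ r := by
    have : 1/(2*eta 0) ≤ 1/2 := by
      rw [div_le_div_iff₀ (by positivity) (by norm_num)]; linarith
    rw [hr_def]; linarith
  have hr1 : r ≤ 1 := by
    have : 0 < 1/(2*eta 0) := by positivity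
    rw [hr_def]; linarith
  have hexp_of : ∀ t : ℕ,
      (∑ i ∈ Finset.range t, lam i) + 2*eta 0*lam 0*r^t ≤ 2*eta 0*lam 0 →
      Real.exp (2*m*∑ i ∈ Finset.range t, lam i) ≤ 3/2 := by
    intro t hS
    have hnn : 0 ≤ 2*eta 0*lam 0*r^t :=
      mul_nonneg (mul_nonneg (by positivity) (hlam 0).le) (pow_nonneg hr0 t)
    have hSle : ∑ i ∈ Finset.range t, lam i ≤ 2*eta 0*lam 0 := by linarith
    have h1 : 2*m*∑ i ∈ Finset.range t, lam i ≤ Real.log (3/2) := by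
      have h2 : 2*m*∑ i ∈ Finset.range t, lam i ≤ 2*m*(2*eta 0*lam 0) :=
        mul_le_mul_of_nonneg_left hSle (by positivity)
      have h3 : 2*m*(2*eta 0*lam 0) = 4*eta 0*(m*lam 0) := by ring
      have h4 : 4*eta 0*(m*lam 0) ≤ 4*eta 0*(Real.log (3/2)/(4*eta 0)) :=
        mul_le_mul_of_nonneg_left h₀ (by positivity)
      have h5 : 4*eta 0*(Real.log (3/2)/(4*eta 0)) = Real.log (3/2) := by
        field_simp
      linarith
    calc Real.exp (2*m*∑ i ∈ Finset.range t, lam i) ≤ Real.exp (Real.log (3/2)) :=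
          Real.exp_le_exp.mpr h1
      _ = 3/2 := Real.exp_log (by norm_num)
  have key : ∀ t : ℕ, lam t ≤ r^t * lam 0 ∧
      (∑ i ∈ Finset.range t, lam i) + 2*eta 0*lam 0*r^t ≤ 2*eta 0*lam 0 ∧
      eta t ≤ eta 0 * Real.exp (2*m*∑ i ∈ Finset.range t, lam i) := by
    intro t
    induction t with
    | zero => refine ⟨by simp, by simp, by simp⟩
    | succ t ih =>
      obtain ⟨ihl, ihS, ihe⟩ := ih
      have hrt1 : r^t ≤ 1 := pow_le_one₀ hr0 hr1
      have hlamt0 : lam t ≤ lam 0 := by nlinarith [(hlam 0).le]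
      have hexp := hexp_of t ihS
      have hetat : eta t ≤ 3/2 * eta 0 := by
        calc eta t ≤ eta 0 * Real.exp (2*m*∑ i ∈ Finset.range t, lam i) := ihe
          _ ≤ eta 0 * (3/2) := mul_le_mul_of_nonneg_left hexp he0'.le
          _ = 3/2 * eta 0 := by ring
      have hmlt : m₁ * lam t ≤ 1/(8*eta 0) := by
        have : m₁ * lam t ≤ m * lam 0 := by
          have := mul_le_mul hm₁le hlamt0 (hlam t).le hm.le
          linarith
        linarith
      have hlstep : lam (t+1) ≤ r * lam t := by
        have happ := h₁ t (by linarith)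
        have hks := key_step (lam t) (eta t) (eta 0) m₁ (hlam t) (heta t) he0 hetat hm₁ hmlt
        calc lam (t+1) ≤ (1 - 1/eta t) * lam t + m₁ * lam t ^2/2 + m₁^2 * lam t^3/(4*eta t) := happ
          _ ≤ (1 - 1/(2*eta 0)) * lam t := hks
          _ = r * lam t := by rw [hr_def]
      have hl' : lam (t+1) ≤ r^(t+1) * lam 0 := by
        calc lam (t+1) ≤ r * lam t := hlstep
          _ ≤ r * (r^t * lam 0) := mul_le_mul_of_nonneg_left ihl hr0
          _ = r^(t+1) * lam 0 := by ring
      refine ⟨hl', ?_, ?_⟩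
      · rw [Finset.sum_range_succ]
        have h6' : r^t * lam 0 + 2*eta 0*lam 0*r^(t+1) = 2*eta 0*lam 0*r^t := by
          rw [hr_def, pow_succ]; field_simp; ring
        linarith
      · rw [Finset.sum_range_succ]
        have h9 : (0:ℝ) ≤ 1 + m₂ * lam t := by nlinarith [mul_pos hm₂ (hlam t)]
        have hb1 : (1 + m₂ * lam t)^2 ≤ Real.exp (2*m*lam t) := by
          have h7 : 1 + m₂ * lam t ≤ Real.exp (m * lam t) := by
            have h8 := Real.add_one_le_exp (m * lam t)
            have : m₂ * lam t ≤ m * lam t :=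
              mul_le_mul_of_nonneg_right hm₂le (hlam t).le
            linarith
          calc (1 + m₂ * lam t)^2 ≤ (Real.exp (m * lam t))^2 :=
                pow_le_pow_left₀ h9 h7 2
            _ = Real.exp (2*m*lam t) := by
                rw [sq, ← Real.exp_add]; ring_nf
        have hetat0 : (0:ℝ) ≤ eta t := by linarith [heta t]
        calc eta (t+1) ≤ (1 + m₂*lam t)^2 * eta t := h₂ t
          _ ≤ Real.exp (2*m*lam t) * (eta 0 * Real.exp (2*m*∑ i ∈ Finset.range t, lam i)) :=
              mul_le_mul hb1 ihe hetat0 (Real.exp_pos _).le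
          _ = eta 0 * Real.exp (2*m*((∑ i ∈ Finset.range t, lam i) + lam t)) := by
              rw [mul_add, Real.exp_add]; ring
  intro t
  obtain ⟨hl, hS, he⟩ := key t
  have hexp := hexp_of t hS
  refine ⟨⟨he, ?_⟩, hl⟩
  have := mul_le_mul_of_nonneg_left hexp he0'.le
  linarith
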